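/- Let p ∈ ℝ with p ≥ 1 and r, s ∈ ℝ with r, s ≥ 0. Then (r + s)^p ≤ (1 + s)^{p−1} · r^p + (1 + s)^p · s. -/

import Mathlib

theorem rpow_add_estimate
    (p : ℝ) (hp : 1 ≤ p) (r s : ℝ) (hr : 0 ≤ r) (hs : 0 ≤ s) :
    (r + s) ^ p ≤ (1 + s) ^ (p - 1) * r ^ p + (1 + s) ^ p * s := by
  have h1 : (0:ℝ) < 1 + s := by linarith
  have key := (convexOn_rpow hp).2 (show ((1+s)*r : ℝ) ∈ Set.Ici (0:ℝ) from Set.mem_Ici.mpr (by positivity))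
    (show (1+s : ℝ) ∈ Set.Ici (0:ℝ) from Set.mem_Ici.mpr (by positivity))
    (show (0:ℝ) ≤ 1/(1+s) by positivity)
    (show (0:ℝ) ≤ s/(1+s) by positivity)
    (by field_simp)
  simp only [smul_eq_mul] at key
  have e1 : 1/(1+s) * ((1+s)*r) + s/(1+s) * (1+s) = r + s := by field_simp
  rw [e1, Real.mul_rpow (le_of_lt h1) hr] at key
  have hps : (1+s:ℝ)^p = (1+s)^(p-1) * (1+s) := by
    rw [← Real.rpow_add_one (ne_of_gt h1)]; ring_nf
  have e3 : 1/(1+s) * ((1+s)^p * r^p) + s/(1+s) * (1+s)^p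
      = (1+s)^(p-1) * r^p + (1+s)^(p-1) * s := by
    rw [hps]; field_simp
  rw [e3] at key
  have hle : (1+s:ℝ)^(p-1) ≤ (1+s)^p :=
    Real.rpow_le_rpow_of_exponent_le (by linarith) (by linarith)
  have : (1+s:ℝ)^(p-1) * s ≤ (1+s)^p * s := mul_le_mul_of_nonneg_right hle hs
  linarith
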